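/- Softmax gap identity for the inverse-function Lagrangian: let q be a positive probability vector on Fin M, let a : Fin M → ℝ satisfy a i > 0 for all i, and let ξ ≥ 0. Define c i = Real.exp ((Real.log (a i) + ξ * Real.log (q i)) / (1 + ξ)) and p' i = c i / (∑ k, c k). Then p' is a positive probability vector on Fin M, and for every positive probability vector p on Fin M: (∑ i, p' i * Real.log (a i / p' i) − ξ * D(p'‖q)) − (∑ i, p i * Real.log (a i / p i) − ξ * D(p‖q)) = (1 + ξ) * D(p‖p'). -/
import Mathlib


/-- Softmax gap identity for the inverse-function Lagrangian: with
`c i = exp((log (a i) + ξ log (q i)) / (1+ξ))` and `p' i = c i / ∑ k, c k`, the vector `p'`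
is a positive probability vector and, for every positive probability vector `p`, the gap of
the Lagrangian `∑ (·) log (a/·) − ξ D(·‖q)` between `p'` and `p` equals `(1+ξ) D(p‖p')`. -/
theorem softmax_gap_inverse_function (M : ℕ) (hM : 1 ≤ M)
    (q : Fin M → ℝ) (hq : ∀ i, 0 < q i) (hq1 : ∑ i, q i = 1)
    (a : Fin M → ℝ) (ha : ∀ i, 0 < a i)
    (ξ : ℝ) (hξ : 0 ≤ ξ)
    (c p' : Fin M → ℝ)
    (hc : ∀ i, c i = Real.exp ((Real.log (a i) + ξ * Real.log (q i)) / (1 + ξ)))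
    (hp' : ∀ i, p' i = c i / ∑ k, c k) :
    ((∀ i, 0 < p' i) ∧ ∑ i, p' i = 1) ∧
    ∀ p : Fin M → ℝ, (∀ i, 0 < p i) → (∑ i, p i = 1) →
      ((∑ i, p' i * Real.log (a i / p' i)) - ξ * ∑ i, p' i * Real.log (p' i / q i)) -
        ((∑ i, p i * Real.log (a i / p i)) - ξ * ∑ i, p i * Real.log (p i / q i)) =
      (1 + ξ) * ∑ i, p i * Real.log (p i / p' i) := by
  have hcpos : ∀ i, 0 < c i := fun i => by rw [hc]; exact Real.exp_pos _
  have hS : 0 < ∑ k, c k := by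
    apply Finset.sum_pos (fun i _ => hcpos i)
    exact ⟨⟨0, hM⟩, Finset.mem_univ _⟩
  have hp'pos : ∀ i, 0 < p' i := fun i => by rw [hp']; exact div_pos (hcpos i) hS
  have hp'1 : ∑ i, p' i = 1 := by
    simp only [hp']; rw [← Finset.sum_div, div_self hS.ne']
  have hξ1 : (0:ℝ) < 1 + ξ := by linarith
  have hlog : ∀ i, Real.log (a i) + ξ * Real.log (q i)
      = (1 + ξ) * (Real.log (p' i) + Real.log (∑ k, c k)) := by
    intro i
    have h1 : Real.log (p' i) = Real.log (c i) - Real.log (∑ k, c k) := by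
      rw [hp', Real.log_div (hcpos i).ne' hS.ne']
    have h2 : Real.log (c i) = (Real.log (a i) + ξ * Real.log (q i)) / (1 + ξ) := by
      rw [hc, Real.log_exp]
    rw [h1, h2]
    field_simp
    ring
  have key : ∀ p : Fin M → ℝ, (∀ i, 0 < p i) → ∑ i, p i = 1 →
      (∑ i, p i * Real.log (a i / p i)) - ξ * ∑ i, p i * Real.log (p i / q i)
      = (1 + ξ) * (Real.log (∑ k, c k)
          + ∑ i, p i * (Real.log (p' i) - Real.log (p i))) := by
    intro p hp hp1
    have hpt : ∀ i, p i * Real.log (a i / p i) - ξ * (p i * Real.log (p i / q i))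
        = (1 + ξ) * (p i * Real.log (∑ k, c k)
            + p i * (Real.log (p' i) - Real.log (p i))) := by
      intro i
      rw [Real.log_div (ha i).ne' (hp i).ne', Real.log_div (hp i).ne' (hq i).ne']
      linear_combination (p i) * hlog i
    calc (∑ i, p i * Real.log (a i / p i)) - ξ * ∑ i, p i * Real.log (p i / q i)
        = ∑ i, (p i * Real.log (a i / p i) - ξ * (p i * Real.log (p i / q i))) := by
          rw [Finset.sum_sub_distrib, Finset.mul_sum]
      _ = ∑ i, (1 + ξ) * (p i * Real.log (∑ k, c k)
            + p i * (Real.log (p' i) - Real.log (p i))) := by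
          exact Finset.sum_congr rfl fun i _ => hpt i
      _ = (1 + ξ) * (Real.log (∑ k, c k)
            + ∑ i, p i * (Real.log (p' i) - Real.log (p i))) := by
          rw [← Finset.mul_sum, Finset.sum_add_distrib, ← Finset.sum_mul, hp1, one_mul]
  refine ⟨⟨hp'pos, hp'1⟩, fun p hp hp1 => ?_⟩
  rw [key p' hp'pos hp'1, key p hp hp1]
  have hz : ∑ i, p' i * (Real.log (p' i) - Real.log (p' i)) = 0 := by simp
  have hr : ∑ i, p i * Real.log (p i / p' i)
      = ∑ i, p i * (Real.log (p i) - Real.log (p' i)) := by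
    exact Finset.sum_congr rfl fun i _ => by
      rw [Real.log_div (hp i).ne' (hp'pos i).ne']
  rw [hz, hr]
  have : ∑ i, p i * (Real.log (p' i) - Real.log (p i))
      = - ∑ i, p i * (Real.log (p i) - Real.log (p' i)) := by
    rw [← Finset.sum_neg_distrib]; exact Finset.sum_congr rfl fun i _ => by ring
  rw [this]; ring
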